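/- Let R' = Z[y_1,...,y_{n-1}] and let I_{n,r} ⊆ R'[ξ_1,...,ξ_r] be the ideal generated by ξ_i(ξ_i + y_1)⋯(ξ_i + y_{n-1}) for 1 ≤ i ≤ r. Then the ideal of symmetric elements I_{n,r} ∩ R'[ξ_1,...,ξ_r]^{S_r} is generated, as an ideal of R'[ξ_1,...,ξ_r]^{S_r}, by the double monomial symmetric polynomials m_λ(ξ|ȳ) for partitions λ with λ_1 ≥ n and at most r parts, where ȳ = (0, y_1, ..., y_{n-1}, 0, y_1, ..., y_{n-1}, ...) extended by ȳ_i = y_{i mod n} with ȳ_0 = ȳ_n = 0. -/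

import Mathlib

open MvPolynomial

/-- The parameters `ȳ_t = y_{t mod n}` (with `ȳ_0 = ȳ_n = 0`), as elements of
`R' = ℤ[y_1, …, y_{n-1}]`, the variable `X j : Fin (n-1)` being `y_{j+1}`. -/
noncomputable def ybar (n : ℕ) (hn : 0 < n) (t : ℕ) : MvPolynomial (Fin (n - 1)) ℤ :=
  if h : t % n = 0 then 0
  else MvPolynomial.X ⟨t % n - 1, by have := Nat.mod_lt t hn; omega⟩

/-- The double monomial symmetric polynomial `m_λ(ξ|ȳ)` in `ξ_1, …, ξ_r` over `R'`:
the symmetrization (sum over distinct terms) of `∏_i (ξ_i + ȳ_0)⋯(ξ_i + ȳ_{λ_i − 1})`. -/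
noncomputable def dmsymY (n : ℕ) (hn : 0 < n) {r : ℕ} (l : Fin r → ℕ) :
    MvPolynomial (Fin r) (MvPolynomial (Fin (n - 1)) ℤ) :=
  (Finset.image
    (fun σ : Equiv.Perm (Fin r) =>
      ∏ i, ∏ t ∈ Finset.range (l i), (MvPolynomial.X (σ i) + MvPolynomial.C (ybar n hn t)))
    Finset.univ).sum id

set_option maxHeartbeats 2000000
set_option synthInstance.maxHeartbeats 1000000

namespace SymIdeal

variable {n : ℕ} (hn : 0 < n) {r : ℕ}

abbrev R' (n : ℕ) := MvPolynomial (Fin (n - 1)) ℤ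
abbrev Big (n r : ℕ) := MvPolynomial (Fin r) (R' n)

lemma ybar_zero : ybar n hn 0 = 0 := by simp [ybar]

lemma ybar_lt {t : ℕ} (ht : t < n) (ht0 : t ≠ 0) :
    ybar n hn t = MvPolynomial.X ⟨t - 1, by omega⟩ := by
  have h1 : t % n = t := Nat.mod_eq_of_lt ht
  unfold ybar
  rw [dif_neg (by omega)]
  congr 1
  exact Fin.ext (by simp [h1])

lemma ybar_injOn : ∀ t ∈ Finset.range n, ∀ s ∈ Finset.range n,
    ybar n hn t = ybar n hn s → t = s := by
  intro t ht s hs h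
  simp only [Finset.mem_range] at ht hs
  rcases eq_or_ne t 0 with rfl | ht0
  · rcases eq_or_ne s 0 with rfl | hs0
    · rfl
    · rw [ybar_zero hn, ybar_lt hn hs hs0] at h
      exact absurd h.symm (X_ne_zero _)
  · rcases eq_or_ne s 0 with rfl | hs0
    · rw [ybar_zero hn, ybar_lt hn ht ht0] at h
      exact absurd h (X_ne_zero _)
    · rw [ybar_lt hn ht ht0, ybar_lt hn hs hs0] at h
      have := Fin.mk.inj_iff.1 (X_injective h)
      omega

lemma range_eq_insert (hn : 0 < n) : Finset.range n = insert 0 (Finset.Icc 1 (n - 1)) := by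
  ext t; simp only [Finset.mem_range, Finset.mem_insert, Finset.mem_Icc]; omega

/-- the generator, rewritten as a full product over `range n` -/
lemma prod_range_eq_gen (j : Fin r) :
    ∏ t ∈ Finset.range n, (X j + C (ybar n hn t)) =
      X j * ∏ t ∈ Finset.Icc 1 (n - 1), (X j + C (ybar n hn t)) := by
  rw [range_eq_insert hn, Finset.prod_insert (by simp)]
  rw [ybar_zero hn, map_zero, add_zero]

noncomputable def fct (n : ℕ) (hn : 0 < n) {r : ℕ} (j : Fin r) (k : ℕ) : Big n r :=
  ∏ t ∈ Finset.range k, (X j + C (ybar n hn t))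

lemma fct_aux (hn : 0 < n) (j : Fin r) (k : ℕ) :
    (∀ μ : Fin r →₀ ℕ, coeff μ (fct n hn j k) ≠ 0 → ∀ i, μ i ≤ if i = j then k else 0) ∧
      coeff (Finsupp.single j k) (fct n hn j k) = 1 := by
  induction k with
  | zero =>
    rw [fct, Finset.range_zero, Finset.prod_empty]
    constructor
    · intro μ h i
      rw [coeff_one] at h
      split at h
      · next heq => rw [← heq]; simp
      · exact absurd rfl h
    · rw [Finsupp.single_zero, coeff_one, if_pos rfl]
  | succ k ih =>
    have hprod : fct n hn j (k + 1) = fct n hn j k * (X j + C (ybar n hn k)) := by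
      rw [fct, fct, Finset.prod_range_succ]
    have hco : ∀ μ : Fin r →₀ ℕ, coeff μ (fct n hn j (k + 1)) =
        (if j ∈ μ.support then coeff (μ - Finsupp.single j 1) (fct n hn j k) else 0)
          + ybar n hn k * coeff μ (fct n hn j k) := by
      intro μ
      rw [hprod, mul_add, coeff_add, coeff_mul_X', mul_comm (fct n hn j k) (C _), coeff_C_mul]
    constructor
    · intro μ h
      rw [hco μ] at h
      have hor : (j ∈ μ.support ∧ coeff (μ - Finsupp.single j 1) (fct n hn j k) ≠ 0)
          ∨ coeff μ (fct n hn j k) ≠ 0 := by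
        by_cases hmem : j ∈ μ.support
        · rw [if_pos hmem] at h
          by_cases hA : coeff (μ - Finsupp.single j 1) (fct n hn j k) = 0
          · right; intro hB; rw [hA, hB, mul_zero, add_zero] at h; exact h rfl
          · exact Or.inl ⟨hmem, hA⟩
        · rw [if_neg hmem, zero_add] at h
          exact Or.inr (right_ne_zero_of_mul h)
      intro i
      rcases hor with ⟨hmem, hA⟩ | hB
      · have h1 := ih.1 _ hA i
        rw [Finsupp.tsub_apply] at h1
        have h2 : (Finsupp.single j 1) i = if i = j then 1 else 0 := by
          rw [Finsupp.single_apply]; simp [eq_comm]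
        rw [h2] at h1
        split_ifs at h1 ⊢ with hij <;> omega
      · have h1 := ih.1 _ hB i
        split_ifs at h1 ⊢ with hij <;> omega
    · rw [hco]
      have h1 : j ∈ (Finsupp.single j (k + 1)).support := by
        rw [Finsupp.mem_support_iff, Finsupp.single_eq_same]; omega
      rw [if_pos h1]
      have h2 : Finsupp.single j (k + 1) - Finsupp.single j 1 = Finsupp.single j k := by
        ext i
        rw [Finsupp.tsub_apply]
        rcases eq_or_ne i j with rfl | hij
        · simp
        · rw [Finsupp.single_apply, Finsupp.single_apply, Finsupp.single_apply,
            if_neg (fun hh => hij hh.symm), if_neg (fun hh => hij hh.symm),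
            if_neg (fun hh => hij hh.symm)]
          rfl
      rw [h2, ih.2]
      have h3 : coeff (Finsupp.single j (k + 1)) (fct n hn j k) = 0 := by
        by_contra hc
        have := ih.1 _ hc j
        rw [if_pos rfl, Finsupp.single_eq_same] at this
        omega
      rw [h3, mul_zero, add_zero]

noncomputable def prodTerm (n : ℕ) (hn : 0 < n) {r : ℕ} (m : Fin r → ℕ) : Big n r :=
  ∏ j, fct n hn j (m j)

noncomputable def bnd {r : ℕ} (s : Finset (Fin r)) (m : Fin r → ℕ) : Fin r →₀ ℕ :=
  ∑ j ∈ s, Finsupp.single j (m j)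

lemma bnd_apply {r : ℕ} (s : Finset (Fin r)) (m : Fin r → ℕ) (i : Fin r) :
    bnd s m i = if i ∈ s then m i else 0 := by
  classical
  rw [bnd, Finset.sum_apply']
  simp only [Finsupp.single_apply]
  rw [Finset.sum_ite_eq' s i (fun j => m j)]

lemma coeff_mul_of_bound {R : Type*} [CommSemiring R] {σ : Type*} [DecidableEq σ]
    {p q : MvPolynomial σ R} {A B : σ →₀ ℕ}
    (hp : ∀ μ : σ →₀ ℕ, coeff μ p ≠ 0 → ∀ i, μ i ≤ A i)
    (hq : ∀ μ : σ →₀ ℕ, coeff μ q ≠ 0 → ∀ i, μ i ≤ B i) :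
    coeff (A + B) (p * q) = coeff A p * coeff B q := by
  rw [coeff_mul]
  apply Finset.sum_eq_single (A, B)
  · rintro ⟨a, b⟩ hab hne
    dsimp only at hne ⊢
    rw [Finset.HasAntidiagonal.mem_antidiagonal] at hab
    by_contra hc
    have h1 := hp _ (left_ne_zero_of_mul hc)
    have h2 := hq _ (right_ne_zero_of_mul hc)
    apply hne
    have hab' : ∀ i, a i + b i = A i + B i := by
      intro i
      have := DFunLike.congr_fun hab i
      simpa using this
    have hA : a = A := by
      ext i
      have e1 := h1 i; have e2 := h2 i; have e3 := hab' i
      omega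
    have hB : b = B := by
      ext i
      have e1 := h1 i; have e2 := h2 i; have e3 := hab' i
      omega
    rw [hA, hB]
  · intro h
    exfalso
    apply h
    rw [Finset.HasAntidiagonal.mem_antidiagonal]

lemma prod_fct_bound (hn : 0 < n) (m : Fin r → ℕ) (s : Finset (Fin r)) :
    ∀ μ : Fin r →₀ ℕ, coeff μ (∏ j ∈ s, fct n hn j (m j)) ≠ 0 →
      ∀ i, μ i ≤ if i ∈ s then m i else 0 := by
  classical
  induction s using Finset.induction with
  | empty =>
    intro μ h i
    rw [Finset.prod_empty, coeff_one] at h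
    split at h
    · next heq => rw [← heq]; simp
    · exact absurd rfl h
  | insert _ _ ha ih =>
    next a s =>
    intro μ h
    rw [Finset.prod_insert ha, coeff_mul] at h
    obtain ⟨⟨x1, x2⟩, hx, hne⟩ := Finset.exists_ne_zero_of_sum_ne_zero h
    dsimp only at hne
    rw [Finset.HasAntidiagonal.mem_antidiagonal] at hx
    have b1 := (fct_aux hn a (m a)).1 _ (left_ne_zero_of_mul hne)
    have b2 := ih _ (right_ne_zero_of_mul hne)
    intro i
    have hμ : μ i = x1 i + x2 i := by rw [← hx, Finsupp.add_apply]
    have b1i := b1 i; have b2i := b2 i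
    by_cases hia : i = a
    · subst hia
      rw [if_pos (Finset.mem_insert_self i s)]
      rw [if_pos rfl] at b1i
      rw [if_neg (fun hh => ha hh)] at b2i
      omega
    · rw [if_neg hia] at b1i
      by_cases his : i ∈ s
      · rw [if_pos his] at b2i
        rw [if_pos (Finset.mem_insert_of_mem his)]
        omega
      · rw [if_neg his] at b2i
        rw [if_neg (by simp [hia, his])]
        omega

lemma prod_fct_top (hn : 0 < n) (m : Fin r → ℕ) (s : Finset (Fin r)) :
    coeff (bnd s m) (∏ j ∈ s, fct n hn j (m j)) = 1 := by
  classical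
  induction s using Finset.induction with
  | empty =>
    rw [Finset.prod_empty, bnd, Finset.sum_empty, coeff_one, if_pos rfl]
  | insert _ _ ha ih =>
    next a s =>
    rw [Finset.prod_insert ha, bnd, Finset.sum_insert ha, ← bnd]
    rw [coeff_mul_of_bound (A := Finsupp.single a (m a)) (B := bnd s m)
      (fun μ h i => by
        have := (fct_aux hn a (m a)).1 _ h i
        rw [Finsupp.single_apply]
        split_ifs at this ⊢ with h1 h2 h2 <;> first | omega | (exact absurd h1.symm h2) |
          (exact absurd h2.symm h1))
      (fun μ h i => by
        have := prod_fct_bound hn m s _ h i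
        rw [bnd_apply]
        exact this)]
    rw [(fct_aux hn a (m a)).2, ih, one_mul]

lemma coeff_prodTerm_le (hn : 0 < n) (m : Fin r → ℕ) {μ : Fin r →₀ ℕ}
    (h : coeff μ (prodTerm n hn m) ≠ 0) : ∀ i, μ i ≤ m i := by
  intro i
  have := prod_fct_bound hn m Finset.univ _ h i
  rwa [if_pos (Finset.mem_univ i)] at this

lemma bnd_univ (m : Fin r → ℕ) : bnd Finset.univ m = Finsupp.equivFunOnFinite.symm m := by
  ext i
  rw [bnd_apply, if_pos (Finset.mem_univ i)]
  simp [Finsupp.equivFunOnFinite]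
  rfl

lemma coeff_prodTerm_top (hn : 0 < n) (m : Fin r → ℕ) :
    coeff (Finsupp.equivFunOnFinite.symm m) (prodTerm n hn m) = 1 := by
  rw [← bnd_univ, prodTerm]
  exact prod_fct_top hn m Finset.univ

lemma prodTerm_injective (hn : 0 < n) :
    Function.Injective (prodTerm n hn (r := r)) := by
  intro m m' h
  have h1 : coeff (Finsupp.equivFunOnFinite.symm m) (prodTerm n hn m') ≠ 0 := by
    rw [← h, coeff_prodTerm_top hn]; exact one_ne_zero
  have h2 : coeff (Finsupp.equivFunOnFinite.symm m') (prodTerm n hn m) ≠ 0 := by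
    rw [h, coeff_prodTerm_top hn]; exact one_ne_zero
  have l1 := coeff_prodTerm_le hn m' h1
  have l2 := coeff_prodTerm_le hn m h2
  funext i
  have e1 := l1 i; have e2 := l2 i
  rw [show (Finsupp.equivFunOnFinite.symm m) i = m i from rfl] at e1
  rw [show (Finsupp.equivFunOnFinite.symm m') i = m' i from rfl] at e2
  omega

noncomputable def rearr {r : ℕ} (l : Fin r → ℕ) : Finset (Fin r → ℕ) :=
  Finset.image (fun σ : Equiv.Perm (Fin r) => l ∘ ⇑σ) Finset.univ

lemma mem_rearr {l m : Fin r → ℕ} : m ∈ rearr l ↔ ∃ σ : Equiv.Perm (Fin r), l ∘ ⇑σ = m := by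
  simp [rearr]

lemma sum_rearr {l m : Fin r → ℕ} (h : m ∈ rearr l) : ∑ i, m i = ∑ i, l i := by
  obtain ⟨σ, rfl⟩ := mem_rearr.1 h
  exact Equiv.sum_comp σ l

lemma self_mem_rearr (l : Fin r → ℕ) : l ∈ rearr l :=
  mem_rearr.2 ⟨Equiv.refl _, rfl⟩

lemma dmsymY_eq (hn : 0 < n) (l : Fin r → ℕ) :
    dmsymY n hn l = ∑ m ∈ rearr l, prodTerm n hn m := by
  have key : ∀ σ : Equiv.Perm (Fin r),
      (∏ i, ∏ t ∈ Finset.range (l i), (X (σ i) + C (ybar n hn t)))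
        = prodTerm n hn (l ∘ ⇑σ⁻¹) := by
    intro σ
    rw [prodTerm, ← Equiv.prod_comp σ (fun j => fct n hn j ((l ∘ ⇑σ⁻¹) j))]
    apply Finset.prod_congr rfl
    intro i _
    have h1 : (l ∘ ⇑σ⁻¹) (σ i) = l i := by simp
    rw [h1, fct]
  have h1 : Finset.image
      (fun σ : Equiv.Perm (Fin r) =>
        ∏ i, ∏ t ∈ Finset.range (l i), (X (σ i) + C (ybar n hn t))) Finset.univ
      = Finset.image (fun σ : Equiv.Perm (Fin r) => prodTerm n hn (l ∘ ⇑σ)) Finset.univ := by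
    ext p
    simp only [Finset.mem_image, Finset.mem_univ, true_and]
    constructor
    · rintro ⟨σ, hσ⟩; exact ⟨σ⁻¹, by rw [← hσ, key σ]⟩
    · rintro ⟨σ, hσ⟩; exact ⟨σ⁻¹, by rw [key σ⁻¹, inv_inv]; exact hσ⟩
  have h2 : Finset.image (fun σ : Equiv.Perm (Fin r) => prodTerm n hn (l ∘ ⇑σ)) Finset.univ
      = Finset.image (prodTerm n hn) (rearr l) := by
    rw [rearr, Finset.image_image]
    rfl
  rw [dmsymY, h1, h2]
  rw [Finset.sum_image (fun x _ y _ h => prodTerm_injective hn h)]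
  rfl

lemma coeff_dmsymY_high (hn : 0 < n) (l : Fin r → ℕ) {μ : Fin r →₀ ℕ}
    (h : ∑ i, l i < ∑ i, μ i) : coeff μ (dmsymY n hn l) = 0 := by
  rw [dmsymY_eq hn l, coeff_sum]
  apply Finset.sum_eq_zero
  intro m hm
  by_contra hc
  have hb := coeff_prodTerm_le hn m hc
  have hsum : ∑ i, m i = ∑ i, l i := sum_rearr hm
  have : ∑ i, μ i ≤ ∑ i, m i := Finset.sum_le_sum (fun i _ => hb i)
  omega

lemma coeff_dmsymY_eqdeg (hn : 0 < n) (l : Fin r → ℕ) {μ : Fin r →₀ ℕ}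
    (h : ∑ i, μ i = ∑ i, l i) :
    coeff μ (dmsymY n hn l) = if ⇑μ ∈ rearr l then 1 else 0 := by
  rw [dmsymY_eq hn l, coeff_sum]
  have each : ∀ m ∈ rearr l, coeff μ (prodTerm n hn m) = if ⇑μ = m then 1 else 0 := by
    intro m hm
    by_cases he : ⇑μ = m
    · rw [if_pos he, ← he]
      have h2 : Finsupp.equivFunOnFinite.symm ⇑μ = μ := Finsupp.equivFunOnFinite_symm_coe μ
      rw [← h2]
      exact coeff_prodTerm_top hn ⇑μ
    · rw [if_neg he]
      by_contra hc
      have hb := coeff_prodTerm_le hn m hc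
      have hsum : ∑ i, m i = ∑ i, l i := sum_rearr hm
      apply he
      funext i
      by_contra hne
      have hlt : μ i < m i := lt_of_le_of_ne (hb i) hne
      have : ∑ j, μ j < ∑ j, m j :=
        Finset.sum_lt_sum (fun j _ => hb j) ⟨i, Finset.mem_univ i, hlt⟩
      omega
  rw [Finset.sum_congr rfl each]
  exact Finset.sum_ite_eq (rearr l) ⇑μ (fun _ => 1)

lemma rename_prodTerm (hn : 0 < n) (τ : Equiv.Perm (Fin r)) (m : Fin r → ℕ) :
    rename ⇑τ (prodTerm n hn m) = prodTerm n hn (m ∘ ⇑τ⁻¹) := by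
  rw [prodTerm, map_prod]
  have h1 : ∀ j, rename ⇑τ (fct n hn j (m j)) = fct n hn (τ j) (m j) := by
    intro j
    rw [fct, fct, map_prod]
    apply Finset.prod_congr rfl
    intro t _
    rw [map_add, rename_X, rename_C]
  rw [Finset.prod_congr rfl (fun j _ => h1 j)]
  rw [prodTerm, ← Equiv.prod_comp τ (fun j' => fct n hn j' ((m ∘ ⇑τ⁻¹) j'))]
  apply Finset.prod_congr rfl
  intro j _
  congr 1
  simp

lemma rearr_comp_mem {l m : Fin r → ℕ} (τ : Equiv.Perm (Fin r)) (h : m ∈ rearr l) :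
    m ∘ ⇑τ ∈ rearr l := by
  obtain ⟨σ, rfl⟩ := mem_rearr.1 h
  exact mem_rearr.2 ⟨τ.trans σ, rfl⟩

lemma dmsymY_isSymmetric (hn : 0 < n) (l : Fin r → ℕ) :
    MvPolynomial.IsSymmetric (dmsymY n hn l) := by
  intro τ
  rw [dmsymY_eq hn l, map_sum]
  rw [Finset.sum_congr rfl (fun m _ => rename_prodTerm hn τ m)]
  apply Finset.sum_nbij' (i := fun m => m ∘ ⇑τ⁻¹) (j := fun m => m ∘ ⇑τ)
  · intro m hm; exact rearr_comp_mem τ⁻¹ hm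
  · intro m hm; exact rearr_comp_mem τ hm
  · intro m _; funext i; simp
  · intro m _; funext i; simp
  · intro m _; rfl

noncomputable def sortA (μ : Fin r → ℕ) : Fin r → ℕ :=
  μ ∘ ⇑(Tuple.sort μ) ∘ ⇑(Fin.revPerm : Equiv.Perm (Fin r))

lemma rev_antitone : Antitone (⇑(Fin.revPerm : Equiv.Perm (Fin r))) := by
  intro a b hab
  simp only [Fin.revPerm_apply]
  exact Fin.rev_le_rev.2 hab

lemma sortA_antitone (μ : Fin r → ℕ) : Antitone (sortA μ) :=
  (Tuple.monotone_sort μ).comp_antitone rev_antitone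

lemma sortA_mem_rearr (μ : Fin r → ℕ) : sortA μ ∈ rearr μ :=
  mem_rearr.2 ⟨(Fin.revPerm : Equiv.Perm (Fin r)).trans (Tuple.sort μ), rfl⟩

lemma antitone_unique {l l' : Fin r → ℕ} (hl : Antitone l) (hl' : Antitone l')
    (σ : Equiv.Perm (Fin r)) (h : l' = l ∘ ⇑σ) : l' = l := by
  have hfσ : Monotone (l ∘ ⇑((Fin.revPerm : Equiv.Perm (Fin r)).trans σ)) := by
    have he : l ∘ ⇑((Fin.revPerm : Equiv.Perm (Fin r)).trans σ)
        = l' ∘ ⇑(Fin.revPerm : Equiv.Perm (Fin r)) := by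
      funext x
      simp [h, Equiv.trans_apply]
    rw [he]
    exact hl'.comp rev_antitone
  have hfτ : Monotone (l ∘ ⇑(Fin.revPerm : Equiv.Perm (Fin r))) :=
    hl.comp rev_antitone
  have hu := Tuple.unique_monotone hfσ hfτ
  funext i
  have e1 := congrFun hu (Fin.rev i)
  simp only [Function.comp_apply, Equiv.trans_apply, Fin.revPerm_apply, Fin.rev_rev] at e1
  rw [h]
  exact e1

lemma rearr_antitone_eq_sortA {l : Fin r → ℕ} {μ : Fin r → ℕ} (hl : Antitone l)
    (h : μ ∈ rearr l) : l = sortA μ := by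
  obtain ⟨σ, hσ⟩ := mem_rearr.1 h
  have h1 : sortA μ ∈ rearr μ := sortA_mem_rearr μ
  obtain ⟨π, hπ⟩ := mem_rearr.1 h1
  have h2 : sortA μ = l ∘ ⇑(π.trans σ) := by
    rw [← hπ, ← hσ]
    rfl
  exact (antitone_unique hl (sortA_antitone μ) (π.trans σ) h2).symm

lemma mem_rearr_sortA (μ : Fin r → ℕ) : μ ∈ rearr (sortA μ) := by
  obtain ⟨π, hπ⟩ := mem_rearr.1 (sortA_mem_rearr μ)
  rw [← hπ]
  exact mem_rearr.2 ⟨π⁻¹, by funext i; simp⟩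

lemma sum_support_eq (μ : Fin r →₀ ℕ) : ∑ i ∈ μ.support, μ i = ∑ i, μ i :=
  Finset.sum_subset (Finset.subset_univ _) (fun i _ h => Finsupp.notMem_support_iff.1 h)

lemma coeff_eq_of_mem_rearr {f : Big n r} (hsym : f.IsSymmetric) {μ : Fin r →₀ ℕ}
    {m : Fin r → ℕ} (h : m ∈ rearr ⇑μ) :
    coeff (Finsupp.equivFunOnFinite.symm m) f = coeff μ f := by
  obtain ⟨π, rfl⟩ := mem_rearr.1 h
  have h1 : Finsupp.equivFunOnFinite.symm (⇑μ ∘ ⇑π) = Finsupp.mapDomain ⇑π⁻¹ μ := by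
    ext j
    rw [show (Finsupp.equivFunOnFinite.symm (⇑μ ∘ ⇑π)) j = μ (π j) from rfl]
    rw [Finsupp.mapDomain_equiv_apply]
    congr 1
  calc coeff (Finsupp.equivFunOnFinite.symm (⇑μ ∘ ⇑π)) f
      = coeff (Finsupp.mapDomain ⇑π⁻¹ μ) (rename ⇑π⁻¹ f) := by rw [h1, hsym π⁻¹]
    _ = coeff μ f := coeff_rename_mapDomain _ (Equiv.injective _) f μ

lemma span_all (hn : 0 < n) (d : ℕ) :
    ∀ f : Big n r, f.IsSymmetric → f.totalDegree < d →
      f ∈ Submodule.span (R' n)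
        {p : Big n r | ∃ l : Fin r → ℕ, Antitone l ∧ p = dmsymY n hn l} := by
  induction d with
  | zero => exact fun f _ h => absurd h (Nat.not_lt_zero _)
  | succ d ih =>
    intro f hsym hdeg
    by_cases hf0 : f = 0
    · rw [hf0]; exact Submodule.zero_mem _
    set D := f.totalDegree with hD
    set Ls : Finset (Fin r → ℕ) :=
      (f.support.filter (fun μ => (∑ i, μ i) = D)).image (fun μ : Fin r →₀ ℕ => sortA ⇑μ) with hLs
    have hLs_anti : ∀ l ∈ Ls, Antitone l := by
      intro l hl
      obtain ⟨μ', _, rfl⟩ := Finset.mem_image.1 hl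
      exact sortA_antitone _
    have hLs_deg : ∀ l ∈ Ls, ∑ i, l i = D := by
      intro l hl
      obtain ⟨μ', hμ', rfl⟩ := Finset.mem_image.1 hl
      rw [sum_rearr (sortA_mem_rearr (⇑μ'))]
      exact (Finset.mem_filter.1 hμ').2
    set g : Big n r :=
      f - ∑ l ∈ Ls, coeff (Finsupp.equivFunOnFinite.symm l) f • dmsymY n hn l with hg
    have claim : ∀ μ : Fin r →₀ ℕ, D ≤ ∑ i, μ i → coeff μ g = 0 := by
      intro μ hw
      have hsumco : coeff μ (∑ l ∈ Ls, coeff (Finsupp.equivFunOnFinite.symm l) f • dmsymY n hn l)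
          = ∑ l ∈ Ls, coeff (Finsupp.equivFunOnFinite.symm l) f * coeff μ (dmsymY n hn l) := by
        rw [coeff_sum]
        exact Finset.sum_congr rfl (fun l _ => by rw [coeff_smul, smul_eq_mul])
      rcases Nat.lt_or_ge D (∑ i, μ i) with hlt | hge
      · have h1 : coeff μ f = 0 := by
          apply coeff_eq_zero_of_totalDegree_lt
          rw [sum_support_eq]
          omega
        have h2 : ∀ l ∈ Ls, coeff μ (dmsymY n hn l) = 0 := by
          intro l hl
          exact coeff_dmsymY_high hn l (by rw [hLs_deg l hl]; omega)
        rw [hg, coeff_sub, hsumco, h1, Finset.sum_congr rfl (fun l hl => by rw [h2 l hl, mul_zero]),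
          Finset.sum_const_zero, sub_zero]
      · have heq : ∑ i, μ i = D := le_antisymm hge hw
        have hterm : ∀ l ∈ Ls,
            coeff (Finsupp.equivFunOnFinite.symm l) f * coeff μ (dmsymY n hn l)
              = if l = sortA ⇑μ then coeff (Finsupp.equivFunOnFinite.symm l) f else 0 := by
          intro l hl
          rw [coeff_dmsymY_eqdeg hn l (by rw [heq, hLs_deg l hl])]
          by_cases hc : ⇑μ ∈ rearr l
          · rw [if_pos hc, if_pos (rearr_antitone_eq_sortA (hLs_anti l hl) hc), mul_one]
          · rw [if_neg hc, if_neg (fun he => hc (by rw [he]; exact mem_rearr_sortA ⇑μ)), mul_zero]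
        have hsum2 : ∑ l ∈ Ls, coeff (Finsupp.equivFunOnFinite.symm l) f * coeff μ (dmsymY n hn l)
            = if sortA ⇑μ ∈ Ls then coeff (Finsupp.equivFunOnFinite.symm (sortA ⇑μ)) f else 0 := by
          rw [Finset.sum_congr rfl hterm]
          exact Finset.sum_ite_eq' Ls (sortA ⇑μ) (fun l => coeff (Finsupp.equivFunOnFinite.symm l) f)
        have hcoeq : coeff (Finsupp.equivFunOnFinite.symm (sortA ⇑μ)) f = coeff μ f :=
          coeff_eq_of_mem_rearr hsym (sortA_mem_rearr ⇑μ)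
        rw [hg, coeff_sub, hsumco, hsum2]
        by_cases hin : sortA ⇑μ ∈ Ls
        · rw [if_pos hin, hcoeq, sub_self]
        · rw [if_neg hin, sub_zero]
          by_contra hne
          apply hin
          apply Finset.mem_image_of_mem
          rw [Finset.mem_filter]
          exact ⟨Finsupp.mem_support_iff.2 hne, heq⟩
    have hsummem : (∑ l ∈ Ls, coeff (Finsupp.equivFunOnFinite.symm l) f • dmsymY n hn l)
        ∈ Submodule.span (R' n)
          {p : Big n r | ∃ l : Fin r → ℕ, Antitone l ∧ p = dmsymY n hn l} := by
      apply Submodule.sum_mem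
      intro l hl
      exact Submodule.smul_mem _ _ (Submodule.subset_span ⟨l, hLs_anti l hl, rfl⟩)
    have hgsym : g.IsSymmetric := by
      intro τ
      rw [hg, map_sub, map_sum, hsym τ]
      congr 1
      apply Finset.sum_congr rfl
      intro l _
      rw [smul_eq_C_mul, map_mul, rename_C, dmsymY_isSymmetric hn l τ, ← smul_eq_C_mul]
    have hfeq : f = g + ∑ l ∈ Ls, coeff (Finsupp.equivFunOnFinite.symm l) f • dmsymY n hn l := by
      rw [hg]; ring
    by_cases hD0 : D = 0
    · have hgz : g = 0 := by
        apply MvPolynomial.ext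
        intro μ
        rw [coeff_zero]
        exact claim μ (by omega)
      rw [hfeq, hgz, zero_add]
      exact hsummem
    · have hgdeg : g.totalDegree < D := by
        rcases eq_or_ne g 0 with h0 | h0
        · rw [h0, totalDegree_zero]; omega
        · rw [totalDegree]
          have hDpos : (⊥ : ℕ) < D := by
            have := Nat.pos_of_ne_zero hD0; simpa using this
          apply (Finset.sup_lt_iff hDpos).2
          intro μ hμ
          have h1 : ∑ i, μ i < D := by
            by_contra hcon
            exact (Finsupp.mem_support_iff.1 hμ) (claim μ (by omega))
          calc (μ.sum fun _ e => e) = ∑ i ∈ μ.support, μ i := rfl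
            _ = ∑ i, μ i := sum_support_eq μ
            _ < D := h1
      have hgmem := ih g hgsym (by omega)
      rw [hfeq]
      exact Submodule.add_mem _ hgmem hsummem

lemma grid {R : Type*} [CommRing R] [IsDomain R] :
    ∀ {m : ℕ} (S : Fin m → Finset R) (h : MvPolynomial (Fin m) R),
      (∀ j, degreeOf j h < (S j).card) →
      (∀ c : Fin m → R, (∀ i, c i ∈ S i) → eval c h = 0) → h = 0 := by
  intro m
  induction m with
  | zero =>
    intro S h _ hev
    obtain ⟨a, rfl⟩ := MvPolynomial.C_surjective (Fin 0) h
    have := hev (fun i => i.elim0) (fun i => i.elim0)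
    rw [eval_C] at this
    rw [this, map_zero]
  | succ m ih =>
    intro S h hdeg hev
    have hq : ∀ k, (finSuccEquiv R m h).coeff k = 0 := by
      intro k
      apply ih (fun j => S j.succ)
      · intro j
        exact lt_of_le_of_lt (degreeOf_coeff_finSuccEquiv h j k) (hdeg j.succ)
      · intro c' hc'
        have hp : (Polynomial.map (eval c') (finSuccEquiv R m h)) = 0 := by
          apply Polynomial.eq_zero_of_natDegree_lt_card_of_eval_eq_zero' _ (S 0)
          · intro y hy
            rw [← eval_eq_eval_mv_eval']
            apply hev
            intro i
            refine Fin.cases ?_ ?_ i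
            · simpa using hy
            · intro j; simpa using hc' j
          · calc (Polynomial.map (eval c') (finSuccEquiv R m h)).natDegree
                ≤ (finSuccEquiv R m h).natDegree := Polynomial.natDegree_map_le
              _ = degreeOf 0 h := natDegree_finSuccEquiv h
              _ < (S 0).card := hdeg 0
        have := congrArg (fun p => Polynomial.coeff p k) hp
        simpa [Polynomial.coeff_map] using this
    have hq0 : finSuccEquiv R m h = 0 :=
      Polynomial.ext (fun k => by rw [hq k, Polynomial.coeff_zero])
    have := congrArg (finSuccEquiv R m).symm hq0
    simpa using this

noncomputable def pts (n : ℕ) (hn : 0 < n) : Finset (R' n) :=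
  (Finset.range n).image (fun t => - ybar n hn t)

lemma pts_card (hn : 0 < n) : (pts n hn).card = n := by
  rw [pts, Finset.card_image_of_injOn, Finset.card_range]
  intro t ht s hs h
  exact ybar_injOn hn t (Finset.mem_coe.1 ht) s (Finset.mem_coe.1 hs) (neg_inj.1 h)

lemma eval_gen_zero (hn : 0 < n) (c : Fin r → R' n) (hc : ∀ i, c i ∈ pts n hn) (i : Fin r) :
    eval c (X i * ∏ t ∈ Finset.Icc 1 (n - 1), (X i + C (ybar n hn t))) = 0 := by
  rw [← prod_range_eq_gen hn i, map_prod]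
  obtain ⟨t0, ht0, hct⟩ := Finset.mem_image.1 (hc i)
  apply Finset.prod_eq_zero ht0
  rw [map_add, eval_X, eval_C, ← hct, neg_add_cancel]

lemma mem_I_eval_zero (hn : 0 < n) {h : Big n r}
    (hmem : h ∈ Ideal.span (Set.range fun i : Fin r =>
      X i * ∏ t ∈ Finset.Icc 1 (n - 1), (X i + C (ybar n hn t))))
    (c : Fin r → R' n) (hc : ∀ i, c i ∈ pts n hn) : eval c h = 0 := by
  have hle : Ideal.span (Set.range fun i : Fin r =>
      X i * ∏ t ∈ Finset.Icc 1 (n - 1), (X i + C (ybar n hn t)))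
      ≤ RingHom.ker (eval c) := by
    rw [Ideal.span_le]
    rintro p ⟨i, rfl⟩
    exact eval_gen_zero hn c hc i
  exact hle hmem

lemma degreeOf_dmsymY_lt (hn : 0 < n) {l : Fin r → ℕ} (hl : ∀ i, l i < n) (j : Fin r) :
    degreeOf j (dmsymY n hn l) < n := by
  rw [MvPolynomial.degreeOf_lt_iff hn]
  intro μ hμ
  rw [MvPolynomial.mem_support_iff, dmsymY_eq hn l, coeff_sum] at hμ
  obtain ⟨m, hm, hne⟩ := Finset.exists_ne_zero_of_sum_ne_zero hμ
  have hb := coeff_prodTerm_le hn m hne j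
  obtain ⟨σ, rfl⟩ := mem_rearr.1 hm
  exact lt_of_le_of_lt hb (hl (σ j))

lemma dmsymY_mem_I (hn : 0 < n) {l : Fin r → ℕ} {i0 : Fin r} (h : n ≤ l i0) :
    dmsymY n hn l ∈ Ideal.span (Set.range fun i : Fin r =>
      X i * ∏ t ∈ Finset.Icc 1 (n - 1), (X i + C (ybar n hn t))) := by
  rw [dmsymY]
  apply Submodule.sum_mem
  intro p hp
  obtain ⟨σ, _, rfl⟩ := Finset.mem_image.1 hp
  have hsplit : ∏ t ∈ Finset.range (l i0), (X (σ i0) + C (ybar n hn t))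
      = (∏ t ∈ Finset.range n, (X (σ i0) + C (ybar n hn t))) *
        ∏ t ∈ Finset.Ico n (l i0), (X (σ i0) + C (ybar n hn t)) := by
    rw [Finset.range_eq_Ico, Finset.range_eq_Ico]
    exact (Finset.prod_Ico_consecutive _ (Nat.zero_le n) h).symm
  have hfac : (∏ i, ∏ t ∈ Finset.range (l i), (X (σ i) + C (ybar n hn t)))
      = (X (σ i0) * ∏ t ∈ Finset.Icc 1 (n - 1), (X (σ i0) + C (ybar n hn t))) *
        ((∏ t ∈ Finset.Ico n (l i0), (X (σ i0) + C (ybar n hn t))) *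
          ∏ i ∈ Finset.univ.erase i0, ∏ t ∈ Finset.range (l i), (X (σ i) + C (ybar n hn t))) := by
    rw [← Finset.mul_prod_erase Finset.univ _ (Finset.mem_univ i0), hsplit,
      prod_range_eq_gen hn]
    ring
  show (∏ i, ∏ t ∈ Finset.range (l i), (X (σ i) + C (ybar n hn t))) ∈ _
  rw [hfac]
  exact Ideal.mul_mem_right _ _ (Ideal.subset_span ⟨σ i0, rfl⟩)
end SymIdeal

set_option synthInstance.maxHeartbeats 1000000 in
/-- For `I_{n,r} ⊆ R'[ξ_1,…,ξ_r]` the ideal generated by the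
`ξ_i(ξ_i + y_1)⋯(ξ_i + y_{n-1})`, the ideal of symmetric elements of `I_{n,r}` is
generated, as an ideal of the ring of symmetric polynomials, by the double monomial
symmetric polynomials `m_λ(ξ|ȳ)` for partitions `λ` with `λ_1 ≥ n` and at most `r`
parts. -/
theorem symmetric_ideal_generated_by_double_monomials (n : ℕ) (hn : 0 < n) (r : ℕ) :
    Ideal.comap
        (MvPolynomial.symmetricSubalgebra (Fin r) (MvPolynomial (Fin (n - 1)) ℤ)).val.toRingHom
        (Ideal.span (Set.range fun i : Fin r =>
          MvPolynomial.X i * ∏ t ∈ Finset.Icc 1 (n - 1),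
            (MvPolynomial.X i + MvPolynomial.C (ybar n hn t))))
      = Ideal.span {x : MvPolynomial.symmetricSubalgebra (Fin r) (MvPolynomial (Fin (n - 1)) ℤ) |
          ∃ l : Fin r → ℕ, (∀ i j : Fin r, i ≤ j → l j ≤ l i) ∧ (∃ i : Fin r, n ≤ l i) ∧
            (x : MvPolynomial (Fin r) (MvPolynomial (Fin (n - 1)) ℤ)) = dmsymY n hn l} := by
  classical
  set I : Ideal (SymIdeal.Big n r) := Ideal.span (Set.range fun i : Fin r =>
      X i * ∏ t ∈ Finset.Icc 1 (n - 1), (X i + C (ybar n hn t))) with hI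
  apply le_antisymm
  · intro x hx
    rw [Ideal.mem_comap] at hx
    have hxI : (x : SymIdeal.Big n r) ∈ I := hx
    have hfsym : (x : SymIdeal.Big n r).IsSymmetric :=
      (MvPolynomial.mem_symmetricSubalgebra _).1 x.2
    have hfspan := SymIdeal.span_all hn ((x : SymIdeal.Big n r).totalDegree + 1) _ hfsym
      (Nat.lt_succ_self _)
    set A : Set (SymIdeal.Big n r) :=
      {p | ∃ l : Fin r → ℕ, Antitone l ∧ (∃ i, n ≤ l i) ∧ p = dmsymY n hn l} with hA
    set B : Set (SymIdeal.Big n r) :=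
      {p | ∃ l : Fin r → ℕ, Antitone l ∧ (∀ i, l i < n) ∧ p = dmsymY n hn l} with hB
    have hsplit : {p : SymIdeal.Big n r | ∃ l : Fin r → ℕ, Antitone l ∧ p = dmsymY n hn l}
        ⊆ A ∪ B := by
      rintro p ⟨l, hl, rfl⟩
      by_cases hc : ∃ i, n ≤ l i
      · exact Or.inl ⟨l, hl, hc, rfl⟩
      · push_neg at hc
        exact Or.inr ⟨l, hl, fun i => hc i, rfl⟩
    have h2 := Submodule.span_mono hsplit hfspan
    rw [Submodule.span_union] at h2
    obtain ⟨g, hg, h, hh, hgh⟩ := Submodule.mem_sup.1 h2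
    have hAI : Submodule.span (SymIdeal.R' n) A ≤ I.restrictScalars (SymIdeal.R' n) := by
      rw [Submodule.span_le]
      rintro p ⟨l, hl, ⟨i0, hi0⟩, rfl⟩
      exact SymIdeal.dmsymY_mem_I hn hi0
    have hgI : g ∈ I := hAI hg
    have hhI : h ∈ I := by
      have he : h = (x : SymIdeal.Big n r) - g := by rw [← hgh]; ring
      rw [he]
      exact Ideal.sub_mem I hxI hgI
    have hdegh : ∀ j, degreeOf j h < n := by
      refine Submodule.span_induction ?_ ?_ ?_ ?_ hh
      · rintro p ⟨l, hl, hlt, rfl⟩ j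
        exact SymIdeal.degreeOf_dmsymY_lt hn hlt j
      · intro j; rw [degreeOf_zero]; exact hn
      · intro p q hp hq ihp ihq j
        exact lt_of_le_of_lt (degreeOf_add_le j p q) (max_lt (ihp j) (ihq j))
      · intro c p hp ihp j
        refine lt_of_le_of_lt ?_ (ihp j)
        rw [degreeOf_eq_sup, degreeOf_eq_sup]
        exact Finset.sup_mono MvPolynomial.support_smul
    have hh0 : h = 0 :=
      SymIdeal.grid (fun _ => SymIdeal.pts n hn) h
        (fun j => by rw [SymIdeal.pts_card hn]; exact hdegh j)
        (fun c hc => SymIdeal.mem_I_eval_zero hn hhI c hc)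
    have hfg : (x : SymIdeal.Big n r) = g := by rw [← hgh, hh0, add_zero]
    have hsub : A ⊆ (((Ideal.span
        {x : MvPolynomial.symmetricSubalgebra (Fin r) (MvPolynomial (Fin (n - 1)) ℤ) |
          ∃ l : Fin r → ℕ, (∀ i j : Fin r, i ≤ j → l j ≤ l i) ∧ (∃ i : Fin r, n ≤ l i) ∧
            (x : MvPolynomial (Fin r) (MvPolynomial (Fin (n - 1)) ℤ)) = dmsymY n hn l}
        ).restrictScalars (SymIdeal.R' n)).map
        (MvPolynomial.symmetricSubalgebra (Fin r) (SymIdeal.R' n)).val.toLinearMap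
          : Set (SymIdeal.Big n r)) := by
      rintro p ⟨l, hl, hi, rfl⟩
      refine ⟨⟨dmsymY n hn l, (MvPolynomial.mem_symmetricSubalgebra _).2
        (SymIdeal.dmsymY_isSymmetric hn l)⟩, ?_, rfl⟩
      exact Ideal.subset_span ⟨l, fun i j hij => hl hij, hi, rfl⟩
    have hmap := Submodule.span_le.2 hsub
    obtain ⟨x', hx'J, hx'val⟩ := hmap hg
    have hxx : x' = x := Subtype.ext (hx'val.trans hfg.symm)
    exact hxx ▸ hx'J
  · rw [Ideal.span_le]
    rintro z ⟨l, hanti, ⟨i0, hi0⟩, hz⟩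
    rw [SetLike.mem_coe, Ideal.mem_comap]
    show (z : SymIdeal.Big n r) ∈ I
    rw [hz]
    exact SymIdeal.dmsymY_mem_I hn hi0
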